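/- Let Ω be a proper subdomain of a metric space and C ≥ 1. Suppose Ω satisfies the C-Gehring–Hayman inequality and the C-ball separation condition, (Ω,k_Ω) is geodesic, and let x₀, y₀ ∈ Ω with σ(x₀,y₀) ≤ C·d_Ω(x₀). If d_Ω(y₀) > (1/(16(3+C)⁴))·σ(x₀,y₀) and for every quasihyperbolic geodesic γ_{x₀y₀} and every x ∈ γ_{x₀y₀} one has ℓ(γ_{x₀y₀}[y₀,x]) ≤ 2C⁴(1+C)·d_Ω(x), then k_Ω(x₀,y₀) < 50·C⁶·(3+C)². -/

import Mathlib

open Metric Set Real MeasureTheory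

noncomputable section

variable {X : Type*} [MetricSpace X]

/-- Distance from `z` to the complement of `Ω`; for `z` in an open set `Ω` this is the
distance to the boundary `∂Ω`. -/
def distCompl (Ω : Set X) (z : X) : ℝ := Metric.infDist z Ωᶜ

/-- `γ` restricted to `[0, L]` is a unit-speed (arclength parametrized) rectifiable curve
with values in `Ω`. -/
structure IsUnitSpeedIn (Ω : Set X) (γ : ℝ → X) (L : ℝ) : Prop where
  nonneg : 0 ≤ L
  mem : ∀ t ∈ Set.Icc (0:ℝ) L, γ t ∈ Ω
  unitSpeed : ∀ s ∈ Set.Icc (0:ℝ) L, ∀ t ∈ Set.Icc (0:ℝ) L, s ≤ t →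
    eVariationOn γ (Set.Icc s t) = ENNReal.ofReal (t - s)

/-- Quasihyperbolic length `∫_γ |dz| / d_Ω(z)` of a unit-speed curve in `Ω`
parametrized on `[0, L]`. -/
def qhLength (Ω : Set X) (γ : ℝ → X) (L : ℝ) : ℝ :=
  ∫ s in (0:ℝ)..L, 1 / distCompl Ω (γ s)

/-- Quasihyperbolic distance in `Ω`: infimum of quasihyperbolic lengths of rectifiable
(unit-speed parametrized) curves in `Ω` joining the two points. -/
def qhDist (Ω : Set X) (x y : X) : ℝ :=
  ⨅ p : {p : (ℝ → X) × ℝ // IsUnitSpeedIn Ω p.1 p.2 ∧ p.1 0 = x ∧ p.1 p.2 = y},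
    qhLength Ω p.1.1 p.1.2

/-- Inner (intrinsic) distance in `Ω`: infimum of lengths of rectifiable curves in `Ω`
joining the two points. -/
def innerDist (Ω : Set X) (x y : X) : ℝ :=
  ⨅ p : {p : (ℝ → X) × ℝ // IsUnitSpeedIn Ω p.1 p.2 ∧ p.1 0 = x ∧ p.1 p.2 = y},
    p.1.2

/-- A quasihyperbolic geodesic: a unit-speed curve in `Ω` each of whose subarcs realizes
the quasihyperbolic distance between its endpoints. -/
def IsQHGeodesic (Ω : Set X) (γ : ℝ → X) (L : ℝ) : Prop :=
  IsUnitSpeedIn Ω γ L ∧ ∀ s ∈ Set.Icc (0:ℝ) L, ∀ t ∈ Set.Icc (0:ℝ) L, s ≤ t →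
    (∫ u in s..t, 1 / distCompl Ω (γ u)) = qhDist Ω (γ s) (γ t)

/-- `(Ω, k_Ω)` is a geodesic space: any two points of `Ω` are joined by a
quasihyperbolic geodesic. -/
def QHGeodesicSpace (Ω : Set X) : Prop :=
  ∀ x ∈ Ω, ∀ y ∈ Ω, ∃ γ L, IsQHGeodesic Ω γ L ∧ γ 0 = x ∧ γ L = y

/-- `(Ω, k_Ω)` is `δ`-Gromov hyperbolic: geodesic triangles for the quasihyperbolic
metric are `δ`-thin. -/
def QHGromovHyperbolic (Ω : Set X) (δ : ℝ) : Prop :=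
  ∀ γ₁ L₁ γ₂ L₂ γ₃ L₃, IsQHGeodesic Ω γ₁ L₁ → IsQHGeodesic Ω γ₂ L₂ →
    IsQHGeodesic Ω γ₃ L₃ → γ₂ 0 = γ₁ 0 → γ₃ 0 = γ₁ L₁ → γ₂ L₂ = γ₃ L₃ →
    ∀ s ∈ Set.Icc (0:ℝ) L₁, ∃ u ∈ γ₂ '' Set.Icc (0:ℝ) L₂ ∪ γ₃ '' Set.Icc (0:ℝ) L₃,
      qhDist Ω (γ₁ s) u ≤ δ

/-- The `C`-Gehring–Hayman inequality: every quasihyperbolic geodesic has length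
at most `C` times the inner distance between its endpoints. -/
def GehringHayman (Ω : Set X) (C : ℝ) : Prop :=
  ∀ γ L, IsQHGeodesic Ω γ L → L ≤ C * innerDist Ω (γ 0) (γ L)

/-- The `C`-ball separation condition: for each quasihyperbolic geodesic `γ`, each point
`z` on `γ` and each curve `α` in `Ω` with the same endpoints, the inner-metric ball
`B_σ(z, C·d_Ω(z))` meets `α`. -/
def BallSeparation (Ω : Set X) (C : ℝ) : Prop :=
  ∀ γ L, IsQHGeodesic Ω γ L → ∀ s ∈ Set.Icc (0:ℝ) L,
    ∀ α M, IsUnitSpeedIn Ω α M → α 0 = γ 0 → α M = γ L →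
      ∃ t ∈ Set.Icc (0:ℝ) M, innerDist Ω (γ s) (α t) < C * distCompl Ω (γ s)

/-- `X` is a length space: the distance between any two points is the infimum of lengths
of curves joining them. -/
def IsLengthSpace (X : Type*) [MetricSpace X] : Prop :=
  ∀ x y : X, ∀ ε > 0, ∃ γ : ℝ → X, ∃ L, IsUnitSpeedIn (Set.univ : Set X) γ L ∧
    γ 0 = x ∧ γ L = y ∧ L ≤ dist x y + ε

/-- `X` is `Q`-doubling: every `r/2`-separated subset of a ball of radius `r` has at
most `Q` points. -/
def QDoubling (X : Type*) [MetricSpace X] (Q : ℝ) : Prop :=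
  ∀ x : X, ∀ r : ℝ, ∀ S : Finset X, (↑S : Set X) ⊆ Metric.ball x r →
    (∀ a ∈ S, ∀ b ∈ S, a ≠ b → r / 2 ≤ dist a b) → (S.card : ℝ) ≤ Q

/-- `Ω` is a proper subdomain: a nonempty, open, connected set different from the whole
space. -/
def IsProperSubdomain (Ω : Set X) : Prop :=
  IsOpen Ω ∧ IsConnected Ω ∧ Ω ≠ Set.univ

/-- The `c₀`-LLC-2 condition: points of `Ω` outside a closed ball `B̄(x, r)` can be
joined by a curve in `Ω` outside `B̄(x, r/c₀)`. -/
def LLC2 (Ω : Set X) (c₀ : ℝ) : Prop :=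
  ∀ x : X, ∀ r : ℝ, ∀ a ∈ Ω \ Metric.closedBall x r, ∀ b ∈ Ω \ Metric.closedBall x r,
    ∃ γ L, IsUnitSpeedIn (Ω \ Metric.closedBall x (r / c₀)) γ L ∧ γ 0 = a ∧ γ L = b

/-- Step 2 of the proof of Theorem 1.6: if `σ(x₀,y₀) ≤ C·d_Ω(x₀)`,
`d_Ω(y₀)` is not too small, and every quasihyperbolic geodesic from `x₀` to `y₀`
satisfies the cone condition `ℓ(γ[y₀,x]) ≤ 2C⁴(1+C)·d_Ω(x)`, then
`k_Ω(x₀, y₀) < 50·C⁶·(3+C)²`. -/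
theorem qhDist_small_of_cone (Ω : Set X) (hΩ : IsProperSubdomain Ω)
    (C : ℝ) (hC : 1 ≤ C) (hGeo : QHGeodesicSpace Ω)
    (hGH : GehringHayman Ω C) (hBS : BallSeparation Ω C)
    (x₀ y₀ : X) (hx₀ : x₀ ∈ Ω) (hy₀ : y₀ ∈ Ω)
    (h1 : innerDist Ω x₀ y₀ ≤ C * distCompl Ω x₀)
    (h2 : (1 / (16 * (3 + C) ^ 4)) * innerDist Ω x₀ y₀ < distCompl Ω y₀)
    (h3 : ∀ γ : ℝ → X, ∀ L : ℝ, IsQHGeodesic Ω γ L → γ 0 = x₀ → γ L = y₀ →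
      ∀ s ∈ Set.Icc (0:ℝ) L, L - s ≤ 2 * C ^ 4 * (1 + C) * distCompl Ω (γ s)) :
    qhDist Ω x₀ y₀ < 50 * C ^ 6 * (3 + C) ^ 2 := by
  obtain ⟨γ, L, hgeo, hγ0, hγL⟩ := hGeo x₀ hx₀ y₀ hy₀
  obtain ⟨hus, hsub⟩ := hgeo
  have hL0 : (0:ℝ) ≤ L := hus.nonneg
  have hcne : Ωᶜ.Nonempty := Set.nonempty_compl.2 hΩ.2.2
  have hpos : ∀ z ∈ Ω, 0 < distCompl Ω z := by
    intro z hz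
    exact (hΩ.1.isClosed_compl.notMem_iff_infDist_pos hcne).1 (by simpa using hz)
  set σ := innerDist Ω x₀ y₀ with hσdef
  set δ := distCompl Ω y₀ with hδdef
  have hδ : 0 < δ := hpos y₀ hy₀
  set A := 2 * C ^ 4 * (1 + C) with hAdef
  have hC0 : (0:ℝ) < C := by linarith
  have hA : 0 < A := by positivity
  have hfpos : ∀ u ∈ Set.Icc (0:ℝ) L, 0 < distCompl Ω (γ u) :=
    fun u hu => hpos _ (hus.mem u hu)
  have hdist : ∀ a ∈ Set.Icc (0:ℝ) L, ∀ b ∈ Set.Icc (0:ℝ) L, a ≤ b →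
      dist (γ a) (γ b) ≤ b - a := by
    intro a ha b hb hab
    have h := eVariationOn.edist_le γ (s := Set.Icc a b)
      (Set.mem_Icc.2 ⟨le_rfl, hab⟩) (Set.mem_Icc.2 ⟨hab, le_rfl⟩)
    rw [hus.unitSpeed a ha b hb hab, edist_dist] at h
    exact (ENNReal.ofReal_le_ofReal_iff (by linarith)).1 h
  have hflow : ∀ u ∈ Set.Icc (0:ℝ) L, δ - (L - u) ≤ distCompl Ω (γ u) := by
    intro u hu
    have h1' := Metric.infDist_le_infDist_add_dist (x := γ L) (y := γ u) (s := Ωᶜ)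
    have h2' : dist (γ L) (γ u) ≤ L - u := by
      rw [dist_comm]; exact hdist u hu L ⟨hL0, le_rfl⟩ hu.2
    have h3'' : distCompl Ω (γ L) ≤ distCompl Ω (γ u) + (L - u) := by
      simp only [distCompl]; linarith
    rw [hγL, ← hδdef] at h3''
    linarith
  have hlip : LipschitzOnWith 1 γ (Set.Icc 0 L) := by
    apply LipschitzOnWith.of_dist_le_mul
    intro a ha b hb
    rcases le_total a b with h | h
    · calc dist (γ a) (γ b) ≤ b - a := hdist a ha b hb h
        _ ≤ 1 * dist a b := by
          rw [Real.dist_eq, one_mul, abs_sub_comm]; exact le_abs_self _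
    · calc dist (γ a) (γ b) = dist (γ b) (γ a) := dist_comm _ _
        _ ≤ a - b := hdist b hb a ha h
        _ ≤ 1 * dist a b := by
          rw [Real.dist_eq, one_mul]; exact le_abs_self _
  have hfcont : ContinuousOn (fun u => distCompl Ω (γ u)) (Set.Icc 0 L) :=
    (Metric.lipschitz_infDist_pt (Ωᶜ)).continuous.comp_continuousOn hlip.continuousOn
  have hgcont : ContinuousOn (fun u => 1 / distCompl Ω (γ u)) (Set.Icc 0 L) := by
    apply ContinuousOn.div continuousOn_const hfcont
    intro u hu; exact ne_of_gt (hfpos u hu)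
  have hgint : ∀ a b : ℝ, 0 ≤ a → a ≤ b → b ≤ L →
      IntervalIntegrable (fun u => 1 / distCompl Ω (γ u)) MeasureTheory.volume a b := by
    intro a b ha hab hbL
    apply ContinuousOn.intervalIntegrable
    apply hgcont.mono
    rw [Set.uIcc_of_le hab]
    exact Set.Icc_subset_Icc ha hbL
  have hq : qhDist Ω x₀ y₀ = ∫ u in (0:ℝ)..L, 1 / distCompl Ω (γ u) := by
    have h := hsub 0 ⟨le_rfl, hL0⟩ L ⟨hL0, le_rfl⟩ hL0
    rw [hγ0, hγL] at h
    exact h.symm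
  have hGHL : L ≤ C * σ := by
    have h := hGH γ L ⟨hus, hsub⟩
    rw [hγ0, hγL] at h; exact h
  have h3' : ∀ u ∈ Set.Icc (0:ℝ) L, L - u ≤ A * distCompl Ω (γ u) :=
    h3 γ L ⟨hus, hsub⟩ hγ0 hγL
  have hC2 : (1:ℝ) ≤ C ^ 2 := by nlinarith
  have hC4 : (1:ℝ) ≤ C ^ 4 := by nlinarith
  have hC6 : (1:ℝ) ≤ C ^ 6 := by nlinarith
  have hC46 : C ^ 4 ≤ C ^ 6 := by nlinarith
  have hC56 : C ^ 5 ≤ C ^ 6 := by nlinarith [pow_pos hC0 5, pow_pos hC0 4]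
  have hrhs : (450:ℝ) * C ^ 6 ≤ 50 * C ^ 6 * (3 + C) ^ 2 := by
    nlinarith [mul_pos (pow_pos hC0 6) hC0, mul_pos (mul_pos (pow_pos hC0 6) hC0) hC0]
  rw [hq]
  by_cases hcase : L ≤ δ / 2
  · have hub : ∀ u ∈ Set.Icc (0:ℝ) L, 1 / distCompl Ω (γ u) ≤ 2 / δ := by
      intro u hu
      have h1' := hflow u hu
      have hfs : δ / 2 ≤ distCompl Ω (γ u) := by
        have := hu.1; have := hu.2; linarith
      calc 1 / distCompl Ω (γ u) ≤ 1 / (δ / 2) :=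
            one_div_le_one_div_of_le (by positivity) hfs
        _ = 2 / δ := one_div_div δ 2
    have hint := intervalIntegral.integral_mono_on hL0 (hgint 0 L le_rfl hL0 le_rfl)
      intervalIntegrable_const hub
    have hconst : (∫ _ in (0:ℝ)..L, (2 / δ : ℝ)) = L * (2 / δ) := by
      simp [smul_eq_mul, mul_div_assoc]
    rw [hconst] at hint
    have h1'' : L * (2 / δ) ≤ (δ / 2) * (2 / δ) :=
      mul_le_mul_of_nonneg_right hcase (by positivity)
    have h2'' : (δ / 2) * (2 / δ) = 1 := by field_simp
    linarith
  · push_neg at hcase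
    set b := L - δ / 2 with hbdef
    have hb0 : 0 < b := by simp only [hbdef]; linarith
    have hbL : b ≤ L := by simp only [hbdef]; linarith
    have hsplit := intervalIntegral.integral_add_adjacent_intervals
      (hgint 0 b le_rfl hb0.le hbL) (hgint b L hb0.le hbL le_rfl)
    have hub2 : ∀ u ∈ Set.Icc b L, 1 / distCompl Ω (γ u) ≤ 2 / δ := by
      intro u hu
      have huIcc : u ∈ Set.Icc (0:ℝ) L := ⟨le_trans hb0.le hu.1, hu.2⟩
      have h1' := hflow u huIcc
      have hfs : δ / 2 ≤ distCompl Ω (γ u) := by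
        have hbu := hu.1
        have : L - u ≤ δ / 2 := by simp only [hbdef] at hbu; linarith
        linarith
      calc 1 / distCompl Ω (γ u) ≤ 1 / (δ / 2) :=
            one_div_le_one_div_of_le (by positivity) hfs
        _ = 2 / δ := one_div_div δ 2
    have hp2 : (∫ u in b..L, 1 / distCompl Ω (γ u)) ≤ 1 := by
      have hint := intervalIntegral.integral_mono_on hbL (hgint b L hb0.le hbL le_rfl)
        intervalIntegrable_const hub2
      have hconst : (∫ _ in b..L, (2 / δ : ℝ)) = (L - b) * (2 / δ) := by
        simp [smul_eq_mul, mul_div_assoc]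
      rw [hconst] at hint
      have hLb : (L - b) * (2 / δ) = 1 := by
        simp only [hbdef]; field_simp; ring
      linarith
    have hub1 : ∀ u ∈ Set.Icc (0:ℝ) b, 1 / distCompl Ω (γ u) ≤ A * (1 / (L - u)) := by
      intro u hu
      have huIcc : u ∈ Set.Icc (0:ℝ) L := ⟨hu.1, le_trans hu.2 hbL⟩
      have hLu : δ / 2 ≤ L - u := by
        have := hu.2; simp only [hbdef] at this; linarith
      have hLu0 : 0 < L - u := lt_of_lt_of_le (by positivity) hLu
      have h := h3' u huIcc
      rw [mul_one_div, div_le_div_iff₀ (hfpos u huIcc) hLu0, one_mul]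
      exact h
    have hcont1 : ContinuousOn (fun u => A * (1 / (L - u))) (Set.uIcc 0 b) := by
      rw [Set.uIcc_of_le hb0.le]
      apply ContinuousOn.mul continuousOn_const
      apply ContinuousOn.div continuousOn_const
      · exact continuousOn_const.sub continuousOn_id
      · intro u hu
        have hub := hu.2
        have : δ / 2 ≤ L - u := by simp only [hbdef] at hub; linarith
        exact ne_of_gt (lt_of_lt_of_le (half_pos hδ) this)
    have hint1 : IntervalIntegrable (fun u => A * (1 / (L - u)))
        MeasureTheory.volume 0 b := hcont1.intervalIntegrable
    have hcalc : (∫ u in (0:ℝ)..b, A * (1 / (L - u))) = A * Real.log (L / (δ / 2)) := by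
      rw [intervalIntegral.integral_const_mul]
      congr 1
      rw [intervalIntegral.integral_comp_sub_left (fun v => 1 / v) L]
      rw [show L - b = δ / 2 by simp only [hbdef]; ring, sub_zero]
      exact integral_one_div (by
        rw [Set.uIcc_of_le (by linarith : δ / 2 ≤ L)]
        rintro ⟨h0, -⟩
        linarith [half_pos hδ])
    have hp1 : (∫ u in (0:ℝ)..b, 1 / distCompl Ω (γ u)) ≤ A * Real.log (L / (δ / 2)) := by
      have hint := intervalIntegral.integral_mono_on hb0.le
        (hgint 0 b le_rfl hb0.le hbL) hint1 hub1
      rw [hcalc] at hint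
      exact hint
    have hLpos : 0 < L := lt_trans (half_pos hδ) hcase
    have hσpos : 0 < σ := by nlinarith
    have hδσ : σ < 16 * (3 + C) ^ 4 * δ := by
      have h16 : (0:ℝ) < 16 * (3 + C) ^ 4 := by positivity
      have := mul_lt_mul_of_pos_left h2 h16
      calc σ = (16 * (3 + C) ^ 4) * ((1 / (16 * (3 + C) ^ 4)) * σ) := by
            field_simp
        _ < 16 * (3 + C) ^ 4 * δ := this
    have hratio : L / (δ / 2) < 32 * C * (3 + C) ^ 4 := by
      rw [div_lt_iff₀ (half_pos hδ)]
      calc L ≤ C * σ := hGHL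
        _ < C * (16 * (3 + C) ^ 4 * δ) := mul_lt_mul_of_pos_left hδσ hC0
        _ = 32 * C * (3 + C) ^ 4 * (δ / 2) := by ring
    have hlog : Real.log (L / (δ / 2)) ≤ Real.log (32 * C * (3 + C) ^ 4) :=
      Real.log_le_log (div_pos hLpos (half_pos hδ)) hratio.le
    have hlogsplit : Real.log (32 * C * (3 + C) ^ 4)
        = Real.log 32 + Real.log C + 4 * Real.log (3 + C) := by
      rw [Real.log_mul (by positivity) (by positivity),
        Real.log_mul (by positivity) (by positivity), Real.log_pow]
      push_cast; ring
    have hl32 : Real.log 32 ≤ 31 := by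
      have := Real.log_le_sub_one_of_pos (show (0:ℝ) < 32 by norm_num); linarith
    have hlC : Real.log C ≤ C - 1 := Real.log_le_sub_one_of_pos hC0
    have hl3C : Real.log (3 + C) ≤ 2 + C := by
      have := Real.log_le_sub_one_of_pos (show (0:ℝ) < 3 + C by linarith); linarith
    have hlogle : Real.log (L / (δ / 2)) ≤ 5 * C + 38 := by
      rw [hlogsplit] at hlog; linarith
    have hAlog : A * Real.log (L / (δ / 2)) ≤ A * (5 * C + 38) :=
      mul_le_mul_of_nonneg_left hlogle hA.le
    have hexp : A * (5 * C + 38) = 10 * C ^ 6 + 86 * C ^ 5 + 76 * C ^ 4 := by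
      rw [hAdef]; ring
    have hfin : A * (5 * C + 38) + 1 < 50 * C ^ 6 * (3 + C) ^ 2 := by
      rw [hexp]; linarith
    rw [← hsplit]
    linarith
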